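/- Let G be a finite group and f : G → ℂ. Suppose that for every prime p, every nontrivial group homomorphism γ : ZMod p → G and every x ∈ G one has ∑_{t ∈ ZMod p} f(x * γ(t)) = 0. Then for every integer n ≥ 2, every nontrivial group homomorphism γ : ZMod n → G and every x ∈ G one has ∑_{t ∈ ZMod n} f(x * γ(t)) = 0. (The Radon transform is determined by geodesics of prime length.) -/

import Mathlib

/-- The Radon transform of `f` at `(x, γ)`: the sum of `f` over the geodesic
determined by the homomorphism `γ : C_n → G`, translated by `x`. -/
noncomputable def radonSum {G : Type*} [Group G] {n : ℕ} [NeZero n]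
    (f : G → ℂ) (γ : Multiplicative (ZMod n) →* G) (x : G) : ℂ :=
  ∑ t : ZMod n, f (x * γ (Multiplicative.ofAdd t))

/-- All Radon transforms of `f` (over geodesics of all lengths `n ≥ 2`) vanish. -/
def RadonNull (G : Type*) [Group G] (f : G → ℂ) : Prop :=
  ∀ (n : ℕ) (hn : 2 ≤ n) (γ : Multiplicative (ZMod n) →* G), γ ≠ 1 → ∀ x : G,
    haveI : NeZero n := ⟨by omega⟩
    radonSum f γ x = 0

/-- The Radon transform is injective on `G`. -/
def RadonInjective (G : Type*) [Group G] : Prop :=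
  ∀ f : G → ℂ, RadonNull G f → f = 0

/-- Any homomorphism from `C_n` is determined by the image of the generator. -/
lemma radon_aux_apply {G : Type*} [Group G] {n : ℕ} [NeZero n]
    (γ : Multiplicative (ZMod n) →* G) (t : ZMod n) :
    γ (Multiplicative.ofAdd t) = γ (Multiplicative.ofAdd (1 : ZMod n)) ^ t.val := by
  rw [← map_pow, ← ofAdd_nsmul]
  congr 1
  rw [nsmul_eq_mul, mul_one, ZMod.natCast_rightInverse t]

/-- The cyclic homomorphism sending the generator of `C_p` to `h`, given `h ^ p = 1`. -/
def radonCycHom {G : Type*} [Group G] {p : ℕ} [NeZero p] (h : G) (hh : h ^ p = 1) :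
    Multiplicative (ZMod p) →* G where
  toFun t := h ^ (Multiplicative.toAdd t).val
  map_one' := by simp
  map_mul' a b := by
    show h ^ (Multiplicative.toAdd a + Multiplicative.toAdd b).val = _
    rw [ZMod.val_add, ← pow_eq_pow_mod _ hh, pow_add]

/-- Sum over geodesics of prime length vanish: `Fin` version. -/
lemma radon_prime_fin_sum {G : Type*} [Group G] [Fintype G] (f : G → ℂ)
    (h : ∀ (p : ℕ) (hp : p.Prime) (γ : Multiplicative (ZMod p) →* G), γ ≠ 1 → ∀ x : G,
      haveI : NeZero p := ⟨hp.ne_zero⟩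
      radonSum f γ x = 0)
    {p : ℕ} (hp : p.Prime) (g : G) (hg : orderOf g = p) (z : G) :
    ∑ i : Fin p, f (z * g ^ (i : ℕ)) = 0 := by
  haveI : NeZero p := ⟨hp.ne_zero⟩
  have hgp : g ^ p = 1 := by rw [← hg, pow_orderOf_eq_one]
  have hne : radonCycHom g hgp ≠ 1 := by
    intro hcon
    have h1 : radonCycHom g hgp (Multiplicative.ofAdd (1 : ZMod p)) = 1 := by
      rw [hcon]; rfl
    have : g ^ (1 : ZMod p).val = 1 := h1
    rw [ZMod.val_one_eq_one_mod] at this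
    rw [Nat.mod_eq_of_lt hp.one_lt, pow_one] at this
    have : orderOf g = 1 := by simp [this]
    rw [hg] at this
    exact hp.one_lt.ne' this
  have h0 := h p hp (radonCycHom g hgp) hne z
  rw [radonSum] at h0
  rw [← h0]
  apply Fintype.sum_equiv
    (⟨fun i : Fin p => ((i : ℕ) : ZMod p),
      fun t => ⟨t.val, t.val_lt⟩,
      fun i => by ext; simp [ZMod.val_cast_of_lt i.isLt],
      fun t => by simp [ZMod.natCast_rightInverse t]⟩ : Fin p ≃ ZMod p)
  intro i
  show f (z * g ^ (i : ℕ)) = f (z * radonCycHom g hgp (Multiplicative.ofAdd _))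
  congr 2
  show g ^ (i : ℕ) = g ^ (Multiplicative.toAdd (Multiplicative.ofAdd ((i : ℕ) : ZMod p))).val
  rw [toAdd_ofAdd, ZMod.val_cast_of_lt i.isLt]

/-- Splitting a sum over `Fin (M * N)` as a double sum. -/
lemma radon_sum_fin_mul (M N : ℕ) (F : ℕ → ℂ) :
    ∑ t : Fin (M * N), F t = ∑ x : Fin M × Fin N, F (x.2 + N * x.1) := by
  refine (Fintype.sum_equiv finProdFinEquiv _ _ ?_).symm
  intro x
  rw [finProdFinEquiv_apply_val]

theorem radon_prime_determines {G : Type*} [Group G] [Fintype G] (f : G → ℂ)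
    (h : ∀ (p : ℕ) (hp : p.Prime) (γ : Multiplicative (ZMod p) →* G), γ ≠ 1 → ∀ x : G,
      haveI : NeZero p := ⟨hp.ne_zero⟩
      radonSum f γ x = 0) :
    RadonNull G f := by
  intro n hn γ hγ x
  haveI : NeZero n := ⟨by omega⟩
  set g := γ (Multiplicative.ofAdd (1 : ZMod n)) with hgdef
  have hg1 : g ≠ 1 := by
    intro hcon
    apply hγ
    refine MonoidHom.ext fun t => ?_
    have := radon_aux_apply γ (Multiplicative.toAdd t)
    rw [ofAdd_toAdd] at this
    rw [this, ← hgdef, hcon, one_pow]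
    rfl
  set m := orderOf g with hmdef
  have hm0 : m ≠ 0 := (orderOf_pos g).ne'
  have hm1 : m ≠ 1 := by
    intro hcon
    exact hg1 (orderOf_eq_one_iff.mp hcon)
  have hgm : g ^ m = 1 := pow_orderOf_eq_one g
  have hmn : m ∣ n := by
    apply orderOf_dvd_of_pow_eq_one
    rw [hgdef, ← map_pow, ← ofAdd_nsmul]
    have : (n : ℕ) • (1 : ZMod n) = 0 := by
      rw [nsmul_eq_mul, mul_one, ZMod.natCast_self]
    rw [this]
    exact map_one γ
  obtain ⟨p, hp, hpm⟩ := Nat.exists_prime_and_dvd hm1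
  set q := g ^ (m / p) with hqdef
  have hordq : orderOf q = p := by
    rw [hqdef, orderOf_pow, ← hmdef]
    rw [Nat.gcd_eq_right (Nat.div_dvd_of_dvd hpm), Nat.div_div_self hpm hm0]
  -- inner sums of length p vanish
  have hinner : ∀ z : G, ∑ i : Fin p, f (z * q ^ (i : ℕ)) = 0 :=
    fun z => radon_prime_fin_sum f h hp q hordq z
  -- sum over the cyclic group generated by g vanishes
  have hcyc : ∀ z : G, ∑ i : Fin m, f (z * g ^ (i : ℕ)) = 0 := by
    intro z
    have hmeq : m = p * (m / p) := (Nat.mul_div_cancel' hpm).symm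
    have : ∑ i : Fin m, f (z * g ^ (i : ℕ))
        = ∑ t : Fin (p * (m / p)), f (z * g ^ (t : ℕ)) := by
      apply Fintype.sum_equiv (finCongr hmeq)
      intro i; rw [finCongr_apply, Fin.coe_cast]
    rw [this, radon_sum_fin_mul p (m / p) (fun k => f (z * g ^ k))]
    have : ∀ x : Fin p × Fin (m / p),
        f (z * g ^ ((x.2 : ℕ) + (m / p) * (x.1 : ℕ)))
          = f ((z * g ^ (x.2 : ℕ)) * q ^ (x.1 : ℕ)) := by
      intro x
      rw [pow_add, mul_assoc, hqdef, ← pow_mul]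
    rw [Fintype.sum_congr _ _ this, Fintype.sum_prod_type_right]
    rw [Finset.sum_eq_zero]
    intro j _
    exact hinner (z * g ^ (j : ℕ))
  -- the full sum
  show radonSum f γ x = 0
  rw [radonSum]
  have hstep : ∑ t : ZMod n, f (x * γ (Multiplicative.ofAdd t))
      = ∑ i : Fin n, f (x * g ^ (i : ℕ)) := by
    symm
    apply Fintype.sum_equiv
      (⟨fun i : Fin n => ((i : ℕ) : ZMod n),
        fun t => ⟨t.val, t.val_lt⟩,
        fun i => by ext; simp [ZMod.val_cast_of_lt i.isLt],
        fun t => by simp [ZMod.natCast_rightInverse t]⟩ : Fin n ≃ ZMod n)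
    intro i
    show f (x * g ^ (i : ℕ)) = f (x * γ (Multiplicative.ofAdd _))
    rw [radon_aux_apply γ _, ← hgdef]
    simp only [Equiv.coe_fn_mk]
    rw [ZMod.val_cast_of_lt i.isLt]
  rw [hstep]
  have hneq : n = (n / m) * m := (Nat.div_mul_cancel hmn).symm
  have hstep2 : ∑ i : Fin n, f (x * g ^ (i : ℕ))
      = ∑ t : Fin ((n / m) * m), f (x * g ^ (t : ℕ)) := by
    apply Fintype.sum_equiv (finCongr hneq)
    intro i; rw [finCongr_apply, Fin.coe_cast]
  rw [hstep2, radon_sum_fin_mul (n / m) m (fun k => f (x * g ^ k))]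
  have hkill : ∀ y : Fin (n / m) × Fin m,
      f (x * g ^ ((y.2 : ℕ) + m * (y.1 : ℕ))) = f (x * g ^ (y.2 : ℕ)) := by
    intro y
    rw [pow_add, pow_mul, hgm, one_pow, mul_one]
  rw [Fintype.sum_congr _ _ hkill, Fintype.sum_prod_type]
  apply Finset.sum_eq_zero
  intro j _
  exact hcyc x
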